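/- Let q = q(n) ∈ (0,1) with q = o(1), let s_a ∈ (0,1] be a constant, let τ > 0 be a constant, and let m = m(n) be a sequence of positive integers with m q s_a² ≥ 2 log n / (τ log(1/q)) for all large n. Set z = (1+τ) m q s_a². If X_n is a Binomial(m, q² s_a²) random variable, then n² · P(X_n > z) → 0 as n → ∞. -/

import Mathlib

open MeasureTheory ProbabilityTheory Filter

set_option maxHeartbeats 1000000

noncomputable section

namespace AttrAlign

/-- The law of a `Binomial(m, r)` random variable, as a measure on `ℕ`
(the success probability `r` is clamped to `[0,1]`). -/
def binomMeasure (m : ℕ) (r : ℝ) : Measure ℕ :=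
  ((PMF.binomial (min (Real.toNNReal r) 1) (min_le_right _ _) m).map
    (fun k => (k : ℕ))).toMeasure

open scoped Classical in
lemma binomMeasure_toReal (m : ℕ) (p : ℝ) (h0 : 0 ≤ p) (h1 : p ≤ 1) (S : Set ℕ) :
    (binomMeasure m p S).toReal =
      ∑ i ∈ Finset.range (m+1),
        (if i ∈ S then (m.choose i : ℝ) * p ^ i * (1-p) ^ (m - i) else 0) := by
  have hP : min (Real.toNNReal p) 1 = Real.toNNReal p :=
    min_eq_left (Real.toNNReal_le_one.mpr h1)
  have key : binomMeasure m p
      = (PMF.map (fun k : Fin (m+1) => (k : ℕ))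
          (PMF.binomial (min (Real.toNNReal p) 1) (min_le_right _ _) m)).toMeasure := by
    rw [binomMeasure]
    congr 1
    rw [show (fun k : ℕ => (k : ℕ)) = id from rfl, PMF.map_id]
    rfl
  rw [key, PMF.toMeasure_map_apply _ _ _ Measurable.of_discrete .of_discrete,
    PMF.toMeasure_apply (hs := .of_discrete), tsum_fintype]
  rw [ENNReal.toReal_sum (fun i _ => lt_top_iff_ne_top.mp
    (lt_of_le_of_lt (Set.indicator_le_self _ _ _) (PMF.apply_lt_top _ _)))]
  rw [Finset.sum_range (fun i =>
    if i ∈ S then (m.choose i : ℝ) * p ^ i * (1-p) ^ (m - i) else 0)]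
  refine Finset.sum_congr rfl (fun i _ => ?_)
  have hone : (1 : ENNReal) - ENNReal.ofReal p = ENNReal.ofReal (1 - p) := by
    rw [ENNReal.ofReal_sub 1 h0, ENNReal.ofReal_one]
  by_cases hi : (i : ℕ) ∈ S
  · rw [Set.indicator_of_mem (by exact hi), if_pos hi, PMF.binomial_apply, hP, Fin.val_last]
    rw [ENNReal.toReal_mul, ENNReal.toReal_mul, ENNReal.toReal_pow, ENNReal.toReal_pow,
      ENNReal.toReal_sub_of_le (ENNReal.coe_le_one_iff.mpr (Real.toNNReal_le_one.mpr h1))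
        ENNReal.one_ne_top, ENNReal.coe_toReal, Real.coe_toNNReal _ h0, ENNReal.toReal_one,
      ENNReal.toReal_natCast]
    ring
  · rw [Set.indicator_of_notMem (by exact hi), if_neg hi, ENNReal.toReal_zero]

open scoped Classical in
lemma chernoff_tail (m k0 : ℕ) (p lam : ℝ) (hp0 : 0 ≤ p) (hp1 : p ≤ 1) (hlam : 1 ≤ lam) :
    ∑ i ∈ Finset.range (m+1),
        (if k0 ≤ i then (m.choose i : ℝ) * p ^ i * (1-p) ^ (m - i) else 0)
      ≤ Real.exp ((m : ℝ) * p * lam) / lam ^ k0 := by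
  have hlam0 : 0 < lam := lt_of_lt_of_le one_pos hlam
  have h1p : 0 ≤ 1 - p := by linarith
  calc ∑ i ∈ Finset.range (m+1),
        (if k0 ≤ i then (m.choose i : ℝ) * p ^ i * (1-p) ^ (m - i) else 0)
      ≤ ∑ i ∈ Finset.range (m+1), ((p * lam) ^ i * (1-p) ^ (m - i) * (m.choose i : ℝ)) / lam ^ k0 := by
        refine Finset.sum_le_sum (fun i _ => ?_)
        split_ifs with h
        · rw [mul_pow, div_eq_mul_inv]
          have h2 : (1:ℝ) ≤ lam ^ i * (lam ^ k0)⁻¹ := by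
            rw [← div_eq_mul_inv, le_div_iff₀ (by positivity), one_mul]
            exact pow_le_pow_right₀ hlam h
          have h3 : 0 ≤ (m.choose i : ℝ) * p ^ i * (1-p) ^ (m - i) := by positivity
          nlinarith [h3, h2, mul_le_mul_of_nonneg_left h2 h3]
        · positivity
   _ = ((p * lam) + (1-p)) ^ m / lam ^ k0 := by
        rw [← Finset.sum_div, add_pow]
   _ ≤ Real.exp ((m : ℝ) * p * lam) / lam ^ k0 := by
        apply div_le_div_of_nonneg_right ?_ (by positivity)
        have hx : 0 ≤ p * (lam - 1) := mul_nonneg hp0 (by linarith)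
        calc (p * lam + (1-p)) ^ m ≤ (Real.exp (p * (lam - 1))) ^ m := by
              refine pow_le_pow_left₀ (by nlinarith) ?_ m
              have := Real.add_one_le_exp (p * (lam - 1))
              linarith
          _ = Real.exp ((m : ℝ) * (p * (lam - 1))) := by rw [← Real.exp_nat_mul]
          _ ≤ Real.exp ((m : ℝ) * p * lam) := by
              apply Real.exp_le_exp.2
              have : (0:ℝ) ≤ (m:ℝ) := Nat.cast_nonneg m
              nlinarith

end AttrAlign

open AttrAlign

/-- Upper tail bound for Step 1 of Algorithm `AttrSparse`: with `z = (1+τ) m q s_a²`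
and `X_n ∼ Binomial(m, q² s_a²)`, if `q = o(1)` and
`m q s_a² ≥ 2 log n / (τ log(1/q))` for all large `n`, then `n² P(X_n > z) → 0`. -/
theorem binomial_upper_tail_attrSparse
    (q : ℕ → ℝ) (m : ℕ → ℕ) (sa τ : ℝ)
    (hq01 : ∀ n, 0 < q n ∧ q n < 1)
    (hq : Tendsto q atTop (nhds 0))
    (hsa : 0 < sa) (hsa1 : sa ≤ 1)
    (hm : ∀ n, 0 < m n)
    (hτ : 0 < τ)
    (hmean : ∀ᶠ n : ℕ in atTop,
      2 * Real.log n / (τ * Real.log (1 / q n)) ≤ (m n : ℝ) * q n * sa ^ 2) :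
    Tendsto (fun n : ℕ => (n : ℝ) ^ 2 *
        (binomMeasure (m n) ((q n) ^ 2 * sa ^ 2)
          {k : ℕ | (1 + τ) * ((m n : ℝ) * q n * sa ^ 2) < (k : ℝ)}).toReal)
      atTop (nhds 0) := by
  classical
  have hτ1 : (0:ℝ) < 1 + τ := by linarith
  set ε : ℝ := 1 / (2 * (1 + τ)) with hε
  have hε0 : 0 < ε := by positivity
  have hε1 : ε < 1 := by
    rw [hε, div_lt_one (by positivity)]; linarith
  -- log(1/q n) → ∞
  have hq' : Tendsto q atTop (nhdsWithin 0 (Set.Ioi 0)) :=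
    tendsto_nhdsWithin_of_tendsto_nhds_of_eventually_within _ hq
      (Eventually.of_forall fun n => (hq01 n).1)
  have hL : Tendsto (fun n => Real.log (1 / q n)) atTop atTop := by
    apply Real.tendsto_log_atTop.comp
    simp only [one_div]; exact hq'.inv_tendsto_nhdsGT_zero
  -- the dominating sequence
  have hg : Tendsto (fun n : ℕ => (n : ℝ) ^ (-(1/τ))) atTop (nhds 0) :=
    (tendsto_rpow_neg_atTop (by positivity)).comp tendsto_natCast_atTop_atTop
  refine squeeze_zero' (Eventually.of_forall fun n =>
    mul_nonneg (by positivity) ENNReal.toReal_nonneg) ?_ hg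
  filter_upwards [eventually_ge_atTop 1, hmean,
    hL.eventually_ge_atTop ((1 - Real.log (1 + τ)) / ε)] with n hn1 hmn hLn
  obtain ⟨hq0, hq1⟩ := hq01 n
  set L : ℝ := Real.log (1 / q n) with hLdef
  have hL0 : 0 < L := Real.log_pos (one_lt_one_div hq0 hq1)
  set μ : ℝ := (m n : ℝ) * q n * sa ^ 2 with hμdef
  have hμ0 : 0 ≤ μ := by positivity
  set z : ℝ := (1 + τ) * μ with hzdef
  have hz0 : 0 ≤ z := by positivity
  set p : ℝ := (q n) ^ 2 * sa ^ 2 with hpdef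
  have hp0 : 0 ≤ p := by positivity
  have hp1 : p ≤ 1 := by
    have h1 : q n ^ 2 ≤ 1 := by nlinarith
    have h2 : sa ^ 2 ≤ 1 := by nlinarith
    nlinarith
  set lam : ℝ := (1 + τ) / q n with hlamdef
  have hlam : 1 ≤ lam := by
    rw [hlamdef, le_div_iff₀ hq0]; linarith
  have hlam0 : 0 < lam := lt_of_lt_of_le one_pos hlam
  set k0 : ℕ := Nat.floor z + 1 with hk0def
  have hn0 : (0:ℝ) < (n:ℝ) := by exact_mod_cast hn1
  have hlogn : 0 ≤ Real.log n := Real.log_nonneg (by exact_mod_cast hn1)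
  -- rewrite the tail probability as a finite sum and apply Chernoff
  have hmemiff : ∀ i : ℕ,
      (i ∈ {k : ℕ | (1 + τ) * ((m n : ℝ) * q n * sa ^ 2) < (k : ℝ)}) ↔ k0 ≤ i := by
    intro i
    simp only [Set.mem_setOf_eq, ← hμdef, ← hzdef, hk0def]
    rw [Nat.add_one_le_iff, ← Nat.floor_lt hz0]
  have htail : (binomMeasure (m n) ((q n) ^ 2 * sa ^ 2)
      {k : ℕ | (1 + τ) * ((m n : ℝ) * q n * sa ^ 2) < (k : ℝ)}).toReal
      ≤ Real.exp ((m n : ℝ) * p * lam) / lam ^ k0 := by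
    rw [← hpdef, binomMeasure_toReal _ _ hp0 hp1]
    rw [Finset.sum_congr rfl (fun i _ => if_congr (hmemiff i) rfl rfl)]
    exact chernoff_tail (m n) k0 p lam hp0 hp1 hlam
  have hmpl : (m n : ℝ) * p * lam = z := by
    rw [hpdef, hlamdef, hzdef, hμdef]
    field_simp
  -- bound exp(z)/lam^k0  by  exp(z - z log lam)
  have hk0z : z ≤ (k0 : ℝ) := by
    have := Nat.lt_floor_add_one z
    push_cast [hk0def]
    push_cast at this
    linarith
  have hlampow : lam ^ ((z:ℝ)) ≤ lam ^ k0 := by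
    rw [← Real.rpow_natCast lam k0]
    exact Real.rpow_le_rpow_of_exponent_le hlam hk0z
  have hstep2 : Real.exp ((m n : ℝ) * p * lam) / lam ^ k0
      ≤ Real.exp (z - Real.log lam * z) := by
    rw [hmpl]
    have h1 : Real.exp z / lam ^ k0 ≤ Real.exp z / lam ^ (z:ℝ) :=
      div_le_div_of_nonneg_left (Real.exp_nonneg z) (Real.rpow_pos_of_pos hlam0 z) hlampow
    have h2 : Real.exp z / lam ^ (z:ℝ) = Real.exp (z - Real.log lam * z) := by
      rw [Real.rpow_def_of_pos hlam0, ← Real.exp_sub]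
    linarith [h1, h2.le, h2.ge]
  -- the exponent estimate
  have hloglam : Real.log lam = Real.log (1 + τ) + L := by
    rw [hlamdef, hLdef, Real.log_div (by linarith) (ne_of_gt hq0), one_div,
      Real.log_inv]
    ring
  have hεL : 1 - Real.log (1 + τ) ≤ ε * L := by
    rw [div_le_iff₀ hε0] at hLn
    linarith [hLn]
  have h5 : (1 - ε) * L ≤ Real.log lam - 1 := by
    rw [hloglam]; nlinarith [hεL]
  have hμL : 2 * Real.log n / τ ≤ μ * L := by
    have h := hmn
    rw [div_le_iff₀ (mul_pos hτ hL0)] at h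
    rw [div_le_iff₀ hτ, show μ * L * τ = μ * (τ * L) by ring]
    exact h
  have hc : (1 + τ) * (1 - ε) = τ + 1/2 := by
    rw [hε]; field_simp; ring
  have h6 : (2 + 1/τ) * Real.log n ≤ z * ((1 - ε) * L) := by
    have e1 : (2 + 1/τ) * Real.log n = (τ + 1/2) * (2 * Real.log n / τ) := by
      field_simp
    have e2 : z * ((1 - ε) * L) = ((1 + τ) * (1 - ε)) * (μ * L) := by
      rw [hzdef]; ring
    rw [e1, e2, hc]
    exact mul_le_mul_of_nonneg_left hμL (by linarith)
  have h7 : z * ((1 - ε) * L) ≤ z * (Real.log lam - 1) :=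
    mul_le_mul_of_nonneg_left h5 hz0
  have hexp : z - Real.log lam * z ≤ -((2 + 1/τ) * Real.log n) := by
    nlinarith [h6, h7]
  -- final computation
  have hfin : Real.exp (z - Real.log lam * z) ≤ (n:ℝ) ^ (-(2 + 1/τ)) := by
    rw [Real.rpow_def_of_pos hn0]
    apply Real.exp_le_exp.2
    calc z - Real.log lam * z ≤ -((2 + 1/τ) * Real.log n) := hexp
      _ = Real.log n * (-(2 + 1/τ)) := by ring
  have hmain : (n : ℝ) ^ 2 *
      (binomMeasure (m n) ((q n) ^ 2 * sa ^ 2)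
        {k : ℕ | (1 + τ) * ((m n : ℝ) * q n * sa ^ 2) < (k : ℝ)}).toReal
      ≤ (n : ℝ) ^ 2 * ((n:ℝ) ^ (-(2 + 1/τ))) :=
    mul_le_mul_of_nonneg_left ((htail.trans hstep2).trans hfin) (by positivity)
  have hpow : (n : ℝ) ^ 2 * ((n:ℝ) ^ (-(2 + 1/τ))) = (n:ℝ) ^ (-(1/τ)) := by
    rw [show ((n:ℝ) ^ 2 : ℝ) = (n:ℝ) ^ ((2:ℕ):ℝ) from (Real.rpow_natCast _ 2).symm,
      ← Real.rpow_add hn0]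
    norm_num
  rw [hpow] at hmain
  exact hmain
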